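/- (Corollary 3(a)) Under the mirror descent setup with β = 1 (one-sided finite differences), γ = 0, a_n = a·n^{−1/2}, and δ_n = d·n^{−1} with a, d > 0, for every n ≥ 1: E[J(θ̂_n) − J(θ*)] ≤ (C₁ + 2C₂ + 2C₃)·max(a, a^{−1})/√n + 2.5·C₄ d² a/n + C₅ d (1 + log n)/n, where C₁ = r²/2, C₂ = c/(2κ), C₃ = K₂² r²/(2κ²), C₄ = b²/κ, C₅ = b r/√(2κ). -/

import Mathlib

open MeasureTheory Filter
open Set

lemma md_tangent_le {J J' : ℝ → ℝ} (hJconv : ConvexOn ℝ Set.univ J)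
    (hJ : ∀ x, HasDerivAt J (J' x) x) (x y : ℝ) :
    J x + J' x * (y - x) ≤ J y := by
  rcases lt_trichotomy x y with hxy | hxy | hxy
  · have h1 := hJconv.le_slope_of_hasDerivAt (Set.mem_univ x) (Set.mem_univ y) hxy (hJ x)
    rw [slope_def_field] at h1
    have h2 : 0 < y - x := by linarith
    have := (le_div_iff₀ h2).mp h1
    linarith
  · simp [hxy]
  · have h1 := hJconv.slope_le_of_hasDerivAt (Set.mem_univ y) (Set.mem_univ x) hxy (hJ x)
    rw [slope_def_field] at h1
    have h2 : 0 < x - y := by linarith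
    have := (div_le_iff₀ h2).mp h1
    linarith

lemma md_onestep {ψ ψ' : ℝ → ℝ} (hψ : ∀ x, HasDerivAt ψ (ψ' x) x)
    {Θ : Set ℝ} (hΘcv : Convex ℝ Θ) {κ : ℝ} (hκ : 0 < κ)
    (hD_lower : ∀ x ∈ Θ, ∀ y ∈ Θ, κ * (x - y) ^ 2 ≤ ψ x - ψ y - ψ' y * (x - y))
    {hn an θn θn1 u : ℝ} (han : 0 < an) (hu : u ∈ Θ) (hθn : θn ∈ Θ) (hθn1 : θn1 ∈ Θ)
    (hmin : IsMinOn (fun x : ℝ => hn * x + (ψ x - ψ θn - ψ' θn * (x - θn)) / an) Θ θn1) :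
    an * (hn * (θn - u)) ≤
      (ψ u - ψ θn - ψ' θn * (u - θn)) - (ψ u - ψ θn1 - ψ' θn1 * (u - θn1))
        + an ^ 2 * hn ^ 2 / (4 * κ) := by
  set f : ℝ → ℝ := fun x => hn * x + (ψ x - ψ θn - ψ' θn * (x - θn)) / an with hf
  have hder : HasFDerivWithinAt f
      ((hn + (ψ' θn1 - ψ' θn) / an) • (1 : ℝ →L[ℝ] ℝ)) Θ θn1 := by
    have hd : HasDerivAt f (hn + (ψ' θn1 - ψ' θn) / an) θn1 := by
      have h1 : HasDerivAt (fun x : ℝ => hn * x) hn θn1 := by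
        simpa using (hasDerivAt_id θn1).const_mul hn
      have h2 : HasDerivAt (fun x : ℝ => (ψ x - ψ θn - ψ' θn * (x - θn)) / an)
          ((ψ' θn1 - ψ' θn) / an) θn1 := by
        have h3 : HasDerivAt (fun x : ℝ => ψ x - ψ θn - ψ' θn * (x - θn))
            (ψ' θn1 - ψ' θn) θn1 := by
          have := ((hψ θn1).sub_const (ψ θn)).sub
            (((hasDerivAt_id θn1).sub_const θn).const_mul (ψ' θn))
          rw [mul_one] at this; exact this
        simpa [div_eq_mul_inv] using h3.mul_const (an⁻¹)
      exact h1.add h2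
    exact hd.hasFDerivAt.hasFDerivWithinAt.congr_fderiv (by ext; simp [mul_comm])
  have hcone : u - θn1 ∈ posTangentConeAt Θ θn1 :=
    sub_mem_posTangentConeAt_of_segment_subset (hΘcv.segment_subset hθn1 hu)
  have hloc : IsLocalMinOn f Θ θn1 := hmin.filter_mono inf_le_right
  have hvi := hloc.hasFDerivWithinAt_nonneg hder hcone
  simp only [ContinuousLinearMap.smul_apply, ContinuousLinearMap.one_apply, smul_eq_mul,
    mul_one] at hvi
  have han' : an ≠ 0 := ne_of_gt han
  have hvi2 : 0 ≤ an * hn * (u - θn1) + (ψ' θn1 - ψ' θn) * (u - θn1) := by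
    have h0 := mul_nonneg han.le hvi
    have hid : an * ((hn + (ψ' θn1 - ψ' θn) / an) * (u - θn1))
        = an * hn * (u - θn1) + (ψ' θn1 - ψ' θn) * (u - θn1) := by
      field_simp
    linarith [hid ▸ h0]
  have key' : an * (hn * (θn1 - u)) ≤
      (ψ u - ψ θn - ψ' θn * (u - θn)) - (ψ u - ψ θn1 - ψ' θn1 * (u - θn1))
        - (ψ θn1 - ψ θn - ψ' θn * (θn1 - θn)) := by nlinarith [hvi2]
  have hDlow := hD_lower θn1 hθn1 θn hθn
  have hquad' : an * (hn * (θn - θn1)) - κ * (θn1 - θn) ^ 2 ≤ an ^ 2 * hn ^ 2 / (4 * κ) := by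
    rw [le_div_iff₀ (by positivity : (0:ℝ) < 4 * κ)]
    nlinarith [sq_nonneg (2 * κ * (θn1 - θn) + an * hn)]
  have hid2 : an * (hn * (θn - u))
      = an * (hn * (θn - θn1)) + an * (hn * (θn1 - u)) := by ring
  linarith [key', hquad', hDlow, hid2]


lemma md_sum_inv_sqrt : ∀ N : ℕ, 1 ≤ N →
    ∑ n ∈ Finset.Icc 1 N, (Real.sqrt n)⁻¹ ≤ 2 * Real.sqrt N := by
  intro N hN
  induction N, hN using Nat.le_induction with
  | base => simp
  | succ N hN ih =>
    rw [Finset.sum_Icc_succ_top (by omega)]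
    have hs : (0:ℝ) ≤ Real.sqrt N := Real.sqrt_nonneg _
    have ht : (0:ℝ) < Real.sqrt (N+1) := Real.sqrt_pos.mpr (by positivity)
    have hsq : Real.sqrt N ^ 2 = (N:ℝ) := Real.sq_sqrt (by positivity)
    have htq : Real.sqrt ((N:ℕ)+1 : ℕ) ^ 2 = ((N:ℝ)+1) := by
      push_cast; exact Real.sq_sqrt (by positivity)
    have h9 : (Real.sqrt ((N:ℕ)+1:ℕ))⁻¹ ≤ 2 * Real.sqrt ((N:ℕ)+1:ℕ) - 2 * Real.sqrt N := by
      rw [inv_eq_one_div, div_le_iff₀ (by push_cast at htq ⊢; nlinarith : (0:ℝ) < Real.sqrt ((N:ℕ)+1:ℕ))]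
      push_cast at htq ⊢
      nlinarith [sq_nonneg (Real.sqrt ((N:ℝ)+1) - Real.sqrt N)]
    push_cast at h9 ih ⊢
    linarith

lemma md_sum_inv_sq : ∀ N : ℕ, 1 ≤ N →
    ∑ n ∈ Finset.Icc 1 N, ((n:ℝ)⁻¹)^2 ≤ 2 - (N:ℝ)⁻¹ := by
  intro N hN
  induction N, hN using Nat.le_induction with
  | base => norm_num
  | succ N hN ih =>
    rw [Finset.sum_Icc_succ_top (by omega)]
    have hN0 : (0:ℝ) < N := by positivity
    have key : (((N:ℝ)+1)⁻¹)^2 ≤ (N:ℝ)⁻¹ - ((N:ℝ)+1)⁻¹ := by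
      rw [inv_pow]
      rw [show (N:ℝ)⁻¹ - ((N:ℝ)+1)⁻¹ = ((N:ℝ)*((N:ℝ)+1))⁻¹ by
        field_simp; ring]
      gcongr
      nlinarith
    push_cast
    linarith

lemma md_harmonic : ∀ N : ℕ, 1 ≤ N →
    ∑ n ∈ Finset.Icc 1 N, ((n:ℝ))⁻¹ ≤ 1 + Real.log N := by
  intro N hN
  induction N, hN using Nat.le_induction with
  | base => norm_num
  | succ N hN ih =>
    rw [Finset.sum_Icc_succ_top (by omega)]
    have hN0 : (0:ℝ) < N := by positivity
    have key : ((N:ℝ)+1)⁻¹ ≤ Real.log ((N:ℝ)+1) - Real.log N := by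
      have h1 : Real.log ((N:ℝ)/((N:ℝ)+1)) ≤ (N:ℝ)/((N:ℝ)+1) - 1 :=
        Real.log_le_sub_one_of_pos (by positivity)
      rw [Real.log_div (ne_of_gt hN0) (by positivity)] at h1
      have h2 : (N:ℝ)/((N:ℝ)+1) - 1 = -((N:ℝ)+1)⁻¹ := by field_simp; ring
      linarith [h1, h2 ▸ h1]
    push_cast
    linarith

lemma md_abel (D A : ℕ → ℝ) (R : ℝ)
    (hD0 : ∀ n, 1 ≤ n → 0 ≤ D n) (hDR : ∀ n, 1 ≤ n → D n ≤ R)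
    (hapos : ∀ n, 1 ≤ n → 0 < A n) (hamono : ∀ n, 1 ≤ n → A (n+1) ≤ A n) :
    ∀ N : ℕ, 1 ≤ N →
      ∑ n ∈ Finset.Icc 1 N, (D n - D (n+1)) / A n ≤ R / A N := by
  have main : ∀ N : ℕ, 1 ≤ N →
      (∑ n ∈ Finset.Icc 1 N, (D n - D (n+1)) / A n) + D (N+1) / A N ≤ R / A N := by
    intro N hN
    induction N, hN using Nat.le_induction with
    | base =>
      simp only [Finset.Icc_self, Finset.sum_singleton]
      have := hapos 1 le_rfl
      rw [← add_div, div_le_div_iff₀ this this]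
      have := hDR 1 le_rfl
      nlinarith [this]
    | succ N hN ih =>
      rw [Finset.sum_Icc_succ_top (by omega)]
      have hA1 : 0 < A (N+1) := hapos _ (by omega)
      have hA0 : 0 < A N := hapos _ hN
      have hfac : (A N)⁻¹ ≤ (A (N+1))⁻¹ := by
        apply inv_anti₀ hA1 (hamono N hN)
      have h1 : D (N+1) * ((A (N+1))⁻¹ - (A N)⁻¹) ≤ R * ((A (N+1))⁻¹ - (A N)⁻¹) :=
        mul_le_mul_of_nonneg_right (hDR _ (by omega)) (by linarith)
      simp only [div_eq_mul_inv] at ih ⊢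
      nlinarith [h1, ih]
  intro N hN
  have h := main N hN
  have : 0 ≤ D (N+1) / A N := div_nonneg (hD0 _ (by omega)) (hapos _ hN).le
  linarith

set_option maxHeartbeats 2000000 in
lemma md_step
    {Ω : Type*} {m0 : MeasurableSpace Ω} {μ : Measure Ω} [IsProbabilityMeasure μ]
    {F : MeasurableSpace Ω} (hF : F ≤ m0)
    {Θ : Set ℝ} (hΘcv : Convex ℝ Θ)
    {J J' : ℝ → ℝ} (hJconv : ConvexOn ℝ Set.univ J)
    (hJ : ∀ x, HasDerivAt J (J' x) x) (hJ'meas : Measurable J') (hJcont : Continuous J)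
    {θstar : ℝ} (hθstar : θstar ∈ Θ) (hmin : ∀ x ∈ Θ, J θstar ≤ J x)
    {ψ ψ' : ℝ → ℝ} (hψ : ∀ x, HasDerivAt ψ (ψ' x) x)
    (hψmeas : Measurable ψ) (hψ'meas : Measurable ψ')
    {κ r : ℝ} (hκ : 0 < κ) (hr : 0 < r)
    (hD_lower : ∀ x ∈ Θ, ∀ y ∈ Θ, κ * (x - y) ^ 2 ≤ ψ x - ψ y - ψ' y * (x - y))
    (hD_upper : ∀ x ∈ Θ, ψ θstar - ψ x - ψ' x * (θstar - x) ≤ r ^ 2 / 2)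
    {K₂ : ℝ} (hK₂ : 0 < K₂)
    (hJ'bound2 : ∀ x ∈ Θ, |J' x| ≤ K₂ * |x - θstar|)
    {an δn : ℝ} (han : 0 < an) (hδn : 0 ≤ δn)
    {b c : ℝ} (hb : 0 ≤ b) (hc : 0 ≤ c)
    {θn θn1 hn Δn : Ω → ℝ}
    (hθnmeas : StronglyMeasurable[F] θn)
    (hθn1meas : AEMeasurable θn1 μ)
    (hhL2 : MemLp hn 2 μ)
    (hθnΘ : ∀ᵐ ω ∂μ, θn ω ∈ Θ) (hθn1Θ : ∀ᵐ ω ∂μ, θn1 ω ∈ Θ)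
    (hupdate : ∀ᵐ ω ∂μ, IsMinOn (fun x : ℝ => hn ω * x +
      (ψ x - ψ (θn ω) - ψ' (θn ω) * (x - θn ω)) / an) Θ (θn1 ω))
    (hbias : μ[hn|F] =ᵐ[μ] fun ω => J' (θn ω) + Δn ω)
    (hΔb : ∀ᵐ ω ∂μ, |Δn ω| ≤ b * δn)
    (hvar : ∀ᵐ ω ∂μ, (μ[fun ω' => (hn ω' - (μ[hn|F]) ω') ^ 2|F]) ω ≤ c) :
    ∫ ω, (J (θn ω) - J θstar) ∂μ ≤
      ((∫ ω, (ψ θstar - ψ (θn ω) - ψ' (θn ω) * (θstar - θn ω)) ∂μ)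
       - (∫ ω, (ψ θstar - ψ (θn1 ω) - ψ' (θn1 ω) * (θstar - θn1 ω)) ∂μ)) / an
      + an * (c + K₂ ^ 2 * r ^ 2 / κ + 2 * b ^ 2 * δn ^ 2) / (4 * κ)
      + b * δn * (r / Real.sqrt (2 * κ)) := by
  -- the radius bound
  set R : ℝ := r / Real.sqrt (2 * κ) with hRdef
  have hRpos : 0 < R := by positivity
  have hR2 : R ^ 2 = r ^ 2 / (2 * κ) := by
    rw [hRdef, div_pow, Real.sq_sqrt (by positivity)]
  have hsqΘ : ∀ x ∈ Θ, (x - θstar) ^ 2 ≤ r ^ 2 / (2 * κ) := by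
    intro x hx
    have h1 := hD_lower θstar hθstar x hx
    have h2 := hD_upper x hx
    rw [le_div_iff₀ (by positivity : (0:ℝ) < 2 * κ)]
    nlinarith
  have habsΘ : ∀ x ∈ Θ, |x - θstar| ≤ R := by
    intro x hx
    calc |x - θstar| = Real.sqrt ((x - θstar) ^ 2) := (Real.sqrt_sq_eq_abs _).symm
      _ ≤ Real.sqrt (R ^ 2) := Real.sqrt_le_sqrt (by rw [hR2]; exact hsqΘ x hx)
      _ = R := Real.sqrt_sq hRpos.le
  have hJ'Θ : ∀ x ∈ Θ, |J' x| ≤ K₂ * R := fun x hx =>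
    (hJ'bound2 x hx).trans (by have := habsΘ x hx; nlinarith)
  have hJΘ : ∀ x ∈ Θ, |J x - J θstar| ≤ K₂ * R * R := by
    intro x hx
    have h1 := md_tangent_le hJconv hJ x θstar
    have h2 := hmin x hx
    have h3 : J x - J θstar ≤ |J' x| * |x - θstar| := by
      have := abs_mul (J' x) (x - θstar) ▸ le_abs_self (J' x * (x - θstar))
      nlinarith [this]
    rw [abs_le]
    constructor
    · nlinarith
    · have := mul_le_mul (hJ'Θ x hx) (habsΘ x hx) (abs_nonneg _) (by positivity)
      nlinarith
  -- basic measurability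
  have mθn : Measurable[m0] θn := (hθnmeas.measurable).mono hF le_rfl
  have intb : ∀ (f : Ω → ℝ) (C : ℝ), AEStronglyMeasurable[m0] f μ →
      (∀ᵐ ω ∂μ, |f ω| ≤ C) → Integrable f μ := fun f C hm hbd =>
    (integrable_const C).mono' hm (by simpa [Real.norm_eq_abs] using hbd)
  have int_h : Integrable hn μ := hhL2.integrable one_le_two
  have int_hsq : Integrable (fun ω => hn ω ^ 2) μ := hhL2.integrable_sq
  -- Bregman distance integrals
  have int_Dn : Integrable (fun ω => ψ θstar - ψ (θn ω) - ψ' (θn ω) * (θstar - θn ω)) μ := by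
    apply intb _ (r ^ 2 / 2)
    · exact ((measurable_const.sub (hψmeas.comp mθn)).sub
        ((hψ'meas.comp mθn).mul (measurable_const.sub mθn))).aestronglyMeasurable
    · filter_upwards [hθnΘ] with ω hω
      have h1 := hD_lower θstar hθstar (θn ω) hω
      have h2 := hD_upper (θn ω) hω
      rw [abs_le]; constructor <;> nlinarith
  have int_Dn1 : Integrable (fun ω => ψ θstar - ψ (θn1 ω) - ψ' (θn1 ω) * (θstar - θn1 ω)) μ := by
    apply intb _ (r ^ 2 / 2)
    · exact ((aemeasurable_const.sub (hψmeas.comp_aemeasurable hθn1meas)).sub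
        ((hψ'meas.comp_aemeasurable hθn1meas).mul
          (aemeasurable_const.sub hθn1meas))).aestronglyMeasurable
    · filter_upwards [hθn1Θ] with ω hω
      have h1 := hD_lower θstar hθstar (θn1 ω) hω
      have h2 := hD_upper (θn1 ω) hω
      rw [abs_le]; constructor <;> nlinarith
  have int_J : Integrable (fun ω => J (θn ω) - J θstar) μ := by
    apply intb _ (K₂ * R * R)
    · exact ((hJcont.measurable.comp mθn).sub measurable_const).aestronglyMeasurable
    · filter_upwards [hθnΘ] with ω hω using hJΘ _ hω
  have int_gJ' : Integrable (fun ω => (θn ω - θstar) * J' (θn ω)) μ := by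
    apply intb _ (R * (K₂ * R))
    · exact ((mθn.sub measurable_const).mul (hJ'meas.comp mθn)).aestronglyMeasurable
    · filter_upwards [hθnΘ] with ω hω
      rw [abs_mul]
      exact mul_le_mul (habsΘ _ hω) (hJ'Θ _ hω) (abs_nonneg _) hRpos.le
  -- conditional expectation m
  set m : Ω → ℝ := μ[hn|F] with hmdef
  have hm_smeas : StronglyMeasurable[F] m := stronglyMeasurable_condExp
  have hm_meas : Measurable[m0] m := (hm_smeas.measurable).mono hF le_rfl
  have hm_bd : ∀ᵐ ω ∂μ, |m ω| ≤ K₂ * R + b * δn := by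
    filter_upwards [hbias, hΔb, hθnΘ] with ω h1 h2 h3
    rw [hmdef]  -- m ω = ...
    calc |m ω| = |J' (θn ω) + Δn ω| := by rw [h1]
      _ ≤ |J' (θn ω)| + |Δn ω| := abs_add_le _ _
      _ ≤ K₂ * R + b * δn := add_le_add (hJ'Θ _ h3) h2
  have int_gh : Integrable (fun ω => (θn ω - θstar) * hn ω) μ := by
    refine ((int_h.abs.const_mul R).mono' ?_ ?_)
    · exact ((mθn.sub measurable_const).aemeasurable.mul
        hhL2.aestronglyMeasurable.aemeasurable).aestronglyMeasurable
    · filter_upwards [hθnΘ] with ω hω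
      simp only [Real.norm_eq_abs, abs_mul]
      exact mul_le_mul_of_nonneg_right (habsΘ _ hω) (abs_nonneg _)
  have int_gm : Integrable (fun ω => (θn ω - θstar) * m ω) μ := by
    apply intb _ (R * (K₂ * R + b * δn))
    · exact ((mθn.sub measurable_const).mul hm_meas).aestronglyMeasurable
    · filter_upwards [hθnΘ, hm_bd] with ω h1 h2
      rw [abs_mul]
      exact mul_le_mul (habsΘ _ h1) h2 (abs_nonneg _) hRpos.le
  have int_mh : Integrable (fun ω => m ω * hn ω) μ := by
    refine ((int_h.abs.const_mul (K₂ * R + b * δn)).mono' ?_ ?_)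
    · exact (hm_meas.aemeasurable.mul
        hhL2.aestronglyMeasurable.aemeasurable).aestronglyMeasurable
    · filter_upwards [hm_bd] with ω hω
      simp only [Real.norm_eq_abs, abs_mul]
      exact mul_le_mul_of_nonneg_right hω (abs_nonneg _)
  have int_msq : Integrable (fun ω => m ω ^ 2) μ := by
    apply intb _ ((K₂ * R + b * δn) ^ 2)
    · exact ((hm_meas.pow_const 2)).aestronglyMeasurable
    · filter_upwards [hm_bd] with ω hω
      calc |m ω ^ 2| = |m ω| ^ 2 := abs_pow _ _
        _ ≤ (K₂ * R + b * δn) ^ 2 := by nlinarith [abs_nonneg (m ω)]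
  have mL2 : MemLp m 2 μ := MemLp.of_bound hm_meas.aestronglyMeasurable _
    (by simpa [Real.norm_eq_abs] using hm_bd)
  have int_hmsq : Integrable (fun ω => (hn ω - m ω) ^ 2) μ := by
    have := (hhL2.sub mL2).integrable_sq
    simpa using this
  have step1 : ∫ ω, (J (θn ω) - J θstar) ∂μ ≤ ∫ ω, (θn ω - θstar) * J' (θn ω) ∂μ := by
    refine integral_mono_ae int_J int_gJ' ?_
    filter_upwards [hθnΘ] with ω hω
    have := md_tangent_le hJconv hJ (θn ω) θstar
    nlinarith [this]
  have step2 : ∫ ω, (θn ω - θstar) * J' (θn ω) ∂μ ≤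
      (∫ ω, (θn ω - θstar) * m ω ∂μ) + b * δn * R := by
    have h1 : ∫ ω, (θn ω - θstar) * J' (θn ω) ∂μ ≤
        ∫ ω, ((θn ω - θstar) * m ω + b * δn * R) ∂μ := by
      refine integral_mono_ae int_gJ' (int_gm.add (integrable_const _)) ?_
      filter_upwards [hbias, hΔb, hθnΘ] with ω h1 h2 h3
      have habs := habsΘ _ h3
      have e : (θn ω - θstar) * m ω
          = (θn ω - θstar) * J' (θn ω) + (θn ω - θstar) * Δn ω := by rw [h1]; ring
      have h5 : |(θn ω - θstar) * Δn ω| ≤ R * (b * δn) := by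
        rw [abs_mul]; exact mul_le_mul habs h2 (abs_nonneg _) hRpos.le
      have h6 := neg_abs_le ((θn ω - θstar) * Δn ω)
      show (θn ω - θstar) * J' (θn ω) ≤ (θn ω - θstar) * m ω + b * δn * R
      nlinarith
    rwa [integral_add int_gm (integrable_const _), integral_const, probReal_univ, one_smul] at h1
  have step3 : ∫ ω, (θn ω - θstar) * m ω ∂μ = ∫ ω, (θn ω - θstar) * hn ω ∂μ := by
    have hpull : μ[(fun ω => (θn ω - θstar) * hn ω)|F]
        =ᵐ[μ] (fun ω => (θn ω - θstar) * m ω) :=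
      condExp_mul_of_stronglyMeasurable_left (hθnmeas.sub stronglyMeasurable_const) int_gh int_h
    rw [← integral_condExp (f := fun ω => (θn ω - θstar) * hn ω) hF]
    exact (integral_congr_ae hpull).symm
  have step4 : an * ∫ ω, (θn ω - θstar) * hn ω ∂μ ≤
      (∫ ω, (ψ θstar - ψ (θn ω) - ψ' (θn ω) * (θstar - θn ω)) ∂μ)
      - (∫ ω, (ψ θstar - ψ (θn1 ω) - ψ' (θn1 ω) * (θstar - θn1 ω)) ∂μ)
      + an ^ 2 * (∫ ω, hn ω ^ 2 ∂μ) / (4 * κ) := by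
    have h1 : ∫ ω, an * ((θn ω - θstar) * hn ω) ∂μ ≤
        ∫ ω, ((ψ θstar - ψ (θn ω) - ψ' (θn ω) * (θstar - θn ω))
          - (ψ θstar - ψ (θn1 ω) - ψ' (θn1 ω) * (θstar - θn1 ω))
          + an ^ 2 / (4 * κ) * hn ω ^ 2) ∂μ := by
      refine integral_mono_ae (int_gh.const_mul an)
        ((int_Dn.sub int_Dn1).add (int_hsq.const_mul _)) ?_
      filter_upwards [hθnΘ, hθn1Θ, hupdate] with ω h1 h2 h3
      have key := md_onestep hψ hΘcv hκ hD_lower han hθstar h1 h2 h3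
      have e1 : an * ((θn ω - θstar) * hn ω) = an * (hn ω * (θn ω - θstar)) := by ring
      have e2 : an ^ 2 / (4 * κ) * hn ω ^ 2 = an ^ 2 * hn ω ^ 2 / (4 * κ) := by ring
      show an * ((θn ω - θstar) * hn ω) ≤ _
      rw [e1]
      linarith [key, e2]
    have intsub : Integrable (fun ω => (ψ θstar - ψ (θn ω) - ψ' (θn ω) * (θstar - θn ω))
        - (ψ θstar - ψ (θn1 ω) - ψ' (θn1 ω) * (θstar - θn1 ω))) μ := int_Dn.sub int_Dn1
    have intc : Integrable (fun ω => an ^ 2 / (4 * κ) * hn ω ^ 2) μ := int_hsq.const_mul _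
    have hR1 : ∫ ω, ((ψ θstar - ψ (θn ω) - ψ' (θn ω) * (θstar - θn ω))
          - (ψ θstar - ψ (θn1 ω) - ψ' (θn1 ω) * (θstar - θn1 ω))
          + an ^ 2 / (4 * κ) * hn ω ^ 2) ∂μ
        = ((∫ ω, (ψ θstar - ψ (θn ω) - ψ' (θn ω) * (θstar - θn ω)) ∂μ)
          - ∫ ω, (ψ θstar - ψ (θn1 ω) - ψ' (θn1 ω) * (θstar - θn1 ω)) ∂μ)
          + an ^ 2 / (4 * κ) * ∫ ω, hn ω ^ 2 ∂μ := by
      rw [integral_add intsub intc, integral_sub int_Dn int_Dn1, integral_const_mul]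
    rw [integral_const_mul, hR1] at h1
    have e3 : an ^ 2 / (4 * κ) * ∫ ω, hn ω ^ 2 ∂μ
        = an ^ 2 * (∫ ω, hn ω ^ 2 ∂μ) / (4 * κ) := by ring
    linarith [h1, e3]
  have hpull2 : μ[(fun ω => m ω * hn ω)|F] =ᵐ[μ] (fun ω => m ω * m ω) :=
    condExp_mul_of_stronglyMeasurable_left hm_smeas int_mh int_h
  have e_mh : ∫ ω, m ω * hn ω ∂μ = ∫ ω, m ω ^ 2 ∂μ := by
    rw [← integral_condExp (f := fun ω => m ω * hn ω) hF]
    refine integral_congr_ae (hpull2.mono fun ω hω => ?_)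
    rw [hω]; exact (pow_two (m ω)).symm
  have var_le : ∫ ω, (hn ω - m ω) ^ 2 ∂μ ≤ c := by
    rw [← integral_condExp (f := fun ω => (hn ω - m ω) ^ 2) hF]
    have h2 : ∫ ω, (μ[fun ω' => (hn ω' - m ω') ^ 2|F]) ω ∂μ ≤ ∫ (_ : Ω), c ∂μ :=
      integral_mono_ae integrable_condExp (integrable_const c) hvar
    simpa [integral_const, measure_univ] using h2
  have msq_le : ∫ ω, m ω ^ 2 ∂μ ≤ K₂ ^ 2 * r ^ 2 / κ + 2 * b ^ 2 * δn ^ 2 := by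
    have h1 : ∫ ω, m ω ^ 2 ∂μ ≤ ∫ (_ : Ω), (K₂ ^ 2 * r ^ 2 / κ + 2 * b ^ 2 * δn ^ 2) ∂μ := by
      refine integral_mono_ae int_msq (integrable_const _) ?_
      filter_upwards [hbias, hΔb, hθnΘ] with ω h1 h2 h3
      have hJ'a := hJ'Θ _ h3
      have e : m ω = J' (θn ω) + Δn ω := h1
      have h4 : m ω ^ 2 ≤ 2 * (J' (θn ω)) ^ 2 + 2 * (Δn ω) ^ 2 := by
        rw [e]; nlinarith [sq_nonneg (J' (θn ω) - Δn ω)]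
      have h5 : (J' (θn ω)) ^ 2 ≤ K₂ ^ 2 * R ^ 2 := by
        nlinarith [abs_nonneg (J' (θn ω)), sq_abs (J' (θn ω)), hRpos]
      have h6 : (Δn ω) ^ 2 ≤ b ^ 2 * δn ^ 2 := by
        nlinarith [abs_nonneg (Δn ω), sq_abs (Δn ω)]
      have h7 : 2 * (K₂ ^ 2 * R ^ 2) = K₂ ^ 2 * r ^ 2 / κ := by
        rw [hR2]; field_simp
      show m ω ^ 2 ≤ _
      nlinarith
    simpa [integral_const, measure_univ] using h1
  have hsplit : ∫ ω, hn ω ^ 2 ∂μ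
      = (∫ ω, (hn ω - m ω) ^ 2 ∂μ) + ∫ ω, m ω ^ 2 ∂μ := by
    have e : (fun ω => (hn ω - m ω) ^ 2)
        = fun ω => (hn ω ^ 2 - 2 * (m ω * hn ω)) + m ω ^ 2 := by
      funext ω; ring
    have h0 : ∫ ω, (hn ω - m ω) ^ 2 ∂μ
        = ((∫ ω, hn ω ^ 2 ∂μ) - 2 * ∫ ω, m ω * hn ω ∂μ) + ∫ ω, m ω ^ 2 ∂μ := by
      have intsub2 : Integrable (fun ω => hn ω ^ 2 - 2 * (m ω * hn ω)) μ :=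
        int_hsq.sub (int_mh.const_mul 2)
      rw [e, integral_add intsub2 int_msq,
        integral_sub int_hsq (int_mh.const_mul 2), integral_const_mul]
    rw [h0, e_mh]; ring
  have H_le : ∫ ω, hn ω ^ 2 ∂μ ≤ c + K₂ ^ 2 * r ^ 2 / κ + 2 * b ^ 2 * δn ^ 2 := by
    rw [hsplit]; linarith
  set X := ∫ ω, (θn ω - θstar) * hn ω ∂μ with hX
  set D1 := ∫ ω, (ψ θstar - ψ (θn ω) - ψ' (θn ω) * (θstar - θn ω)) ∂μ with hD1
  set D2 := ∫ ω, (ψ θstar - ψ (θn1 ω) - ψ' (θn1 ω) * (θstar - θn1 ω)) ∂μ with hD2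
  set H := ∫ ω, hn ω ^ 2 ∂μ with hH
  have hXle : X ≤ (D1 - D2) / an + an * H / (4 * κ) := by
    have e : an * ((D1 - D2) / an + an * H / (4 * κ))
        = (D1 - D2) + an ^ 2 * H / (4 * κ) := by field_simp
    refine le_of_mul_le_mul_left ?_ han
    rw [e]
    linarith [step4]
  have hHmono : an * H / (4 * κ) ≤ an * (c + K₂ ^ 2 * r ^ 2 / κ + 2 * b ^ 2 * δn ^ 2) / (4 * κ) := by
    gcongr
  calc ∫ ω, (J (θn ω) - J θstar) ∂μ
      ≤ ∫ ω, (θn ω - θstar) * J' (θn ω) ∂μ := step1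
    _ ≤ (∫ ω, (θn ω - θstar) * m ω ∂μ) + b * δn * R := step2
    _ = X + b * δn * R := by rw [step3]
    _ ≤ (D1 - D2) / an + an * H / (4 * κ) + b * δn * R := by linarith
    _ ≤ (D1 - D2) / an + an * (c + K₂ ^ 2 * r ^ 2 / κ + 2 * b ^ 2 * δn ^ 2) / (4 * κ)
        + b * δn * R := by linarith




set_option maxHeartbeats 2000000 in
/-- Corollary 3(a): mirror descent with one-sided finite differences
(`β = 1`), bounded conditional variance (`γ = 0`), stepsizes
`a_n = a n^{−1/2}` and widths `δ_n = d n^{−1}`. -/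
theorem md_corollary3a
    {Ω : Type*} {m0 : MeasurableSpace Ω} {μ : Measure Ω} [IsProbabilityMeasure μ]
    (ℱ : ℕ → MeasurableSpace Ω) (hℱ_le : ∀ n, ℱ n ≤ m0) (hℱ_mono : Monotone ℱ)
    (Θ : Set ℝ) (hΘne : Θ.Nonempty) (hΘcp : IsCompact Θ) (hΘcv : Convex ℝ Θ)
    (J J' : ℝ → ℝ) (hJconv : ConvexOn ℝ Set.univ J)
    (hJ : ∀ x, HasDerivAt J (J' x) x)
    (θstar : ℝ) (hθstar : θstar ∈ Θ) (hmin : ∀ x ∈ Θ, J θstar ≤ J x)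
    (ψ ψ' : ℝ → ℝ) (hψ : ∀ x, HasDerivAt ψ (ψ' x) x)
    (κ r : ℝ) (hκ : 0 < κ) (hr : 0 < r)
    (hD_lower : ∀ x ∈ Θ, ∀ y ∈ Θ,
      κ * (x - y) ^ 2 ≤ ψ x - ψ y - ψ' y * (x - y))
    (hD_upper : ∀ x ∈ Θ, ψ θstar - ψ x - ψ' x * (θstar - x) ≤ r ^ 2 / 2)
    (K₁ K₂ : ℝ) (hK₁ : 0 < K₁) (hK₁₂ : K₁ ≤ K₂)
    (hJ'bound : ∀ x ∈ Θ, K₁ * |x - θstar| ≤ |J' x| ∧ |J' x| ≤ K₂ * |x - θstar|)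
    (a₀ d₀ : ℝ) (ha₀ : 0 < a₀) (hd₀ : 0 < d₀)
    (a δ : ℕ → ℝ)
    (ha : ∀ n : ℕ, a n = a₀ * (n : ℝ) ^ (-(1 : ℝ) / 2))
    (hδ : ∀ n : ℕ, δ n = d₀ * (n : ℝ)⁻¹)
    (b c : ℝ) (hb : 0 ≤ b) (hc : 0 ≤ c)
    (θ h Δ : ℕ → Ω → ℝ)
    (hθmeas : ∀ n, StronglyMeasurable[ℱ n] (θ n))
    (hhL2 : ∀ n, MemLp (h n) 2 μ)
    (hθΘ : ∀ n, ∀ᵐ ω ∂μ, θ n ω ∈ Θ)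
    (hupdate : ∀ n : ℕ, 1 ≤ n → ∀ᵐ ω ∂μ,
      IsMinOn (fun x : ℝ => h n ω * x +
        (ψ x - ψ (θ n ω) - ψ' (θ n ω) * (x - θ n ω)) / a n) Θ (θ (n + 1) ω))
    (hbias : ∀ n : ℕ, 1 ≤ n →
      μ[h n | ℱ n] =ᵐ[μ] fun ω => J' (θ n ω) + Δ n ω)
    (hΔ : ∀ n : ℕ, 1 ≤ n → ∀ᵐ ω ∂μ, |Δ n ω| ≤ b * δ n)
    (hvar : ∀ n : ℕ, 1 ≤ n → ∀ᵐ ω ∂μ,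
      (μ[fun ω' => (h n ω' - (μ[h n | ℱ n]) ω') ^ 2 | ℱ n]) ω ≤ c) :
    ∀ n : ℕ, 1 ≤ n →
      ∫ ω, (J ((∑ i ∈ Finset.Icc 1 n, θ i ω) / n) - J θstar) ∂μ ≤
        (r ^ 2 / 2 + 2 * (c / (2 * κ)) + 2 * (K₂ ^ 2 * r ^ 2 / (2 * κ ^ 2)))
            * max a₀ a₀⁻¹ / Real.sqrt n
        + 2.5 * (b ^ 2 / κ) * d₀ ^ 2 * a₀ / n
        + (b * r / Real.sqrt (2 * κ)) * d₀ * (1 + Real.log n) / n := by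
  intro N hN
  -- preliminaries
  have hK₂ : 0 < K₂ := lt_of_lt_of_le hK₁ hK₁₂
  have hψ'meas : Measurable ψ' := by
    have e : ψ' = deriv ψ := funext fun x => ((hψ x).deriv).symm
    rw [e]; exact measurable_deriv ψ
  have hψmeas : Measurable ψ :=
    (Differentiable.continuous fun x => (hψ x).differentiableAt).measurable
  have hJ'meas : Measurable J' := by
    have e : J' = deriv J := funext fun x => ((hJ x).deriv).symm
    rw [e]; exact measurable_deriv J
  have hJcont : Continuous J := Differentiable.continuous fun x => (hJ x).differentiableAt
  have harw : ∀ n : ℕ, a n = a₀ * (Real.sqrt n)⁻¹ := by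
    intro n
    rw [ha n, Real.sqrt_eq_rpow, ← Real.rpow_neg (Nat.cast_nonneg n)]
    norm_num
  have ha_pos : ∀ n : ℕ, 1 ≤ n → 0 < a n := by
    intro n hn
    rw [harw n]
    have h1 : (0:ℝ) < Real.sqrt n := Real.sqrt_pos.mpr (by exact_mod_cast hn)
    positivity
  have ha_anti : ∀ n : ℕ, 1 ≤ n → a (n+1) ≤ a n := by
    intro n hn
    rw [harw n, harw (n+1)]
    have h2 : (0:ℝ) < Real.sqrt n := Real.sqrt_pos.mpr (by exact_mod_cast hn)
    have h3 : Real.sqrt n ≤ Real.sqrt ((n+1 : ℕ) : ℝ) :=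
      Real.sqrt_le_sqrt (by push_cast; linarith)
    have h4 := inv_anti₀ h2 h3
    exact mul_le_mul_of_nonneg_left h4 ha₀.le
  have hδ_nonneg : ∀ n : ℕ, 0 ≤ δ n := fun n => by rw [hδ n]; positivity
  have hθaem : ∀ n, AEMeasurable (θ n) μ :=
    fun n => ((hθmeas n).measurable.mono (hℱ_le n) le_rfl).aemeasurable
  -- radius facts
  set R : ℝ := r / Real.sqrt (2 * κ) with hRdef
  have hRpos : 0 < R := by positivity
  have hR2 : R ^ 2 = r ^ 2 / (2 * κ) := by
    rw [hRdef, div_pow, Real.sq_sqrt (by positivity)]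
  have habsΘ : ∀ x ∈ Θ, |x - θstar| ≤ R := by
    intro x hx
    have h1 := hD_lower θstar hθstar x hx
    have h2 := hD_upper x hx
    have h3 : (x - θstar) ^ 2 ≤ r ^ 2 / (2 * κ) := by
      rw [le_div_iff₀ (by positivity : (0:ℝ) < 2 * κ)]; nlinarith
    calc |x - θstar| = Real.sqrt ((x - θstar) ^ 2) := (Real.sqrt_sq_eq_abs _).symm
      _ ≤ Real.sqrt (R ^ 2) := Real.sqrt_le_sqrt (by rw [hR2]; exact h3)
      _ = R := Real.sqrt_sq hRpos.le
  have hJ'Θ : ∀ x ∈ Θ, |J' x| ≤ K₂ * R := fun x hx =>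
    ((hJ'bound x hx).2).trans (by have := habsΘ x hx; nlinarith)
  have hJΘ : ∀ x ∈ Θ, |J x - J θstar| ≤ K₂ * R * R := by
    intro x hx
    have h1 := md_tangent_le hJconv hJ x θstar
    have h2 := hmin x hx
    have h3 : J x - J θstar ≤ |J' x| * |x - θstar| := by
      have h4 := abs_mul (J' x) (x - θstar) ▸ le_abs_self (J' x * (x - θstar))
      nlinarith [h4]
    rw [abs_le]
    refine ⟨by nlinarith, ?_⟩
    have := mul_le_mul (hJ'Θ x hx) (habsΘ x hx) (abs_nonneg _) (by positivity)
    nlinarith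
  -- sequences of integrals
  set DD : ℕ → ℝ :=
    fun n => ∫ ω, (ψ θstar - ψ (θ n ω) - ψ' (θ n ω) * (θstar - θ n ω)) ∂μ with hDDdef
  set E : ℕ → ℝ := fun n => ∫ ω, (J (θ n ω) - J θstar) ∂μ with hEdef
  have int_D : ∀ n : ℕ,
      Integrable (fun ω => ψ θstar - ψ (θ n ω) - ψ' (θ n ω) * (θstar - θ n ω)) μ := by
    intro n
    apply (integrable_const (r ^ 2 / 2)).mono'
    · exact ((aemeasurable_const.sub (hψmeas.comp_aemeasurable (hθaem n))).sub
        ((hψ'meas.comp_aemeasurable (hθaem n)).mul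
          (aemeasurable_const.sub (hθaem n)))).aestronglyMeasurable
    · filter_upwards [hθΘ n] with ω hω
      have h1 := hD_lower θstar hθstar (θ n ω) hω
      have h2 := hD_upper (θ n ω) hω
      rw [Real.norm_eq_abs, abs_le]
      constructor <;> nlinarith [sq_nonneg (θstar - θ n ω)]
  have int_J : ∀ n : ℕ, Integrable (fun ω => J (θ n ω) - J θstar) μ := by
    intro n
    apply (integrable_const (K₂ * R * R)).mono'
    · exact ((hJcont.measurable.comp_aemeasurable (hθaem n)).sub
        aemeasurable_const).aestronglyMeasurable
    · filter_upwards [hθΘ n] with ω hω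
      rw [Real.norm_eq_abs]; exact hJΘ _ hω
  -- one-step expectation bound
  have step : ∀ n : ℕ, 1 ≤ n → E n ≤ (DD n - DD (n+1)) / a n
      + a n * (c + K₂ ^ 2 * r ^ 2 / κ + 2 * b ^ 2 * (δ n) ^ 2) / (4 * κ)
      + b * δ n * R :=
    fun n hn => md_step (hℱ_le n) hΘcv hJconv hJ hJ'meas hJcont hθstar hmin hψ hψmeas
      hψ'meas hκ hr hD_lower hD_upper hK₂ (fun x hx => (hJ'bound x hx).2)
      (ha_pos n hn) (hδ_nonneg n) hb hc (hθmeas n) (hθaem (n+1)) (hhL2 n)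
      (hθΘ n) (hθΘ (n+1)) (hupdate n hn) (hbias n hn) (hΔ n hn) (hvar n hn)
  -- DD bounds
  have hDD0 : ∀ n, 1 ≤ n → 0 ≤ DD n := by
    intro n hn
    apply integral_nonneg_of_ae
    filter_upwards [hθΘ n] with ω hω
    have := hD_lower θstar hθstar (θ n ω) hω
    show (0:ℝ) ≤ ψ θstar - ψ (θ n ω) - ψ' (θ n ω) * (θstar - θ n ω)
    nlinarith [mul_nonneg hκ.le (sq_nonneg (θstar - θ n ω))]
  have hDDr : ∀ n, 1 ≤ n → DD n ≤ r ^ 2 / 2 := by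
    intro n hn
    have h1 : DD n ≤ ∫ (_ : Ω), r ^ 2 / 2 ∂μ := by
      refine integral_mono_ae (int_D n) (integrable_const _) ?_
      filter_upwards [hθΘ n] with ω hω using hD_upper (θ n ω) hω
    simpa [integral_const, measure_univ] using h1
  have abel := md_abel DD a (r ^ 2 / 2) hDD0 hDDr ha_pos ha_anti N hN
  -- constants
  set C2 : ℝ := c + K₂ ^ 2 * r ^ 2 / κ with hC2def
  have hC2 : 0 ≤ C2 := by rw [hC2def]; positivity
  set K3 : ℝ := a₀ * b ^ 2 * d₀ ^ 2 / (2 * κ) with hK3def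
  have hK3 : 0 ≤ K3 := by rw [hK3def]; positivity
  have hNR : (0:ℝ) < N := by exact_mod_cast hN
  have hsN0 : (0:ℝ) < Real.sqrt N := Real.sqrt_pos.mpr hNR
  have hsN2 : Real.sqrt N ^ 2 = (N:ℝ) := Real.sq_sqrt hNR.le
  -- per-index bound
  have hper : ∀ i ∈ Finset.Icc 1 N, E i ≤ (DD i - DD (i+1)) / a i
      + C2 / (4 * κ) * a₀ * (Real.sqrt i)⁻¹ + K3 * ((i:ℝ)⁻¹) ^ 2
      + b * d₀ * R * (i:ℝ)⁻¹ := by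
    intro i hi
    have hi1 : 1 ≤ i := (Finset.mem_Icc.mp hi).1
    have hs := step i hi1
    have hsi : (1:ℝ) ≤ Real.sqrt i := by
      rw [show (1:ℝ) = Real.sqrt 1 by simp]
      exact Real.sqrt_le_sqrt (by exact_mod_cast hi1)
    have hsi0 : (0:ℝ) < Real.sqrt i := by linarith
    have hiR : (0:ℝ) < (i:ℝ) := by exact_mod_cast hi1
    have e1 : a i * (C2 + 2 * b ^ 2 * (δ i) ^ 2) / (4 * κ)
        = C2 / (4 * κ) * a₀ * (Real.sqrt i)⁻¹
          + K3 * ((Real.sqrt i)⁻¹ * ((i:ℝ)⁻¹) ^ 2) := by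
      rw [harw i, hδ i, hK3def]
      field_simp
      ring
    have e3 : b * δ i * R = b * d₀ * R * (i:ℝ)⁻¹ := by rw [hδ i]; ring
    have e2 : K3 * ((Real.sqrt i)⁻¹ * ((i:ℝ)⁻¹) ^ 2) ≤ K3 * ((i:ℝ)⁻¹) ^ 2 := by
      apply mul_le_mul_of_nonneg_left ?_ hK3
      have h5 : (Real.sqrt i)⁻¹ ≤ 1 := inv_le_one_of_one_le₀ hsi
      nlinarith [sq_nonneg ((i:ℝ)⁻¹)]
    linarith [hs, e1, e3, e2]
  have hsum1 : ∑ i ∈ Finset.Icc 1 N, E i ≤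
      ∑ i ∈ Finset.Icc 1 N, ((DD i - DD (i+1)) / a i
        + C2 / (4 * κ) * a₀ * (Real.sqrt i)⁻¹ + K3 * ((i:ℝ)⁻¹) ^ 2
        + b * d₀ * R * (i:ℝ)⁻¹) := Finset.sum_le_sum hper
  rw [Finset.sum_add_distrib, Finset.sum_add_distrib, Finset.sum_add_distrib,
    ← Finset.mul_sum, ← Finset.mul_sum, ← Finset.mul_sum] at hsum1
  have eaN : (r ^ 2 / 2) / a N = r ^ 2 / 2 * Real.sqrt N / a₀ := by
    rw [harw N]
    field_simp
  have B2 : C2 / (4 * κ) * a₀ * ∑ i ∈ Finset.Icc 1 N, (Real.sqrt i)⁻¹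
      ≤ C2 / (4 * κ) * a₀ * (2 * Real.sqrt N) :=
    mul_le_mul_of_nonneg_left (md_sum_inv_sqrt N hN) (by positivity)
  have B3 : K3 * ∑ i ∈ Finset.Icc 1 N, ((i:ℝ)⁻¹) ^ 2 ≤ K3 * 2 := by
    refine mul_le_mul_of_nonneg_left ?_ hK3
    have := md_sum_inv_sq N hN
    have h6 : (0:ℝ) ≤ (N:ℝ)⁻¹ := by positivity
    linarith
  have B4 : b * d₀ * R * ∑ i ∈ Finset.Icc 1 N, ((i:ℝ))⁻¹
      ≤ b * d₀ * R * (1 + Real.log N) :=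
    mul_le_mul_of_nonneg_left (md_harmonic N hN) (by positivity)
  have sumstep : ∑ i ∈ Finset.Icc 1 N, E i ≤
      r ^ 2 / 2 * Real.sqrt N / a₀ + C2 / (4 * κ) * a₀ * (2 * Real.sqrt N)
      + K3 * 2 + b * d₀ * R * (1 + Real.log N) := by
    rw [← eaN]
    linarith [hsum1, abel, B2, B3, B4]
  -- Jensen's inequality for the averaged iterate
  have hallΘ : ∀ᵐ ω ∂μ, ∀ i, θ i ω ∈ Θ := ae_all_iff.mpr hθΘ
  have hw : ∑ _i ∈ Finset.Icc 1 N, ((N:ℝ))⁻¹ = 1 := by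
    rw [Finset.sum_const, Nat.card_Icc, Nat.add_sub_cancel, nsmul_eq_mul]
    exact mul_inv_cancel₀ (ne_of_gt hNR)
  have hhatmem : ∀ᵐ ω ∂μ, (∑ i ∈ Finset.Icc 1 N, θ i ω) / (N:ℝ) ∈ Θ := by
    filter_upwards [hallΘ] with ω hω
    have hmem := hΘcv.sum_mem (t := Finset.Icc 1 N) (w := fun _ => (N:ℝ)⁻¹)
      (z := fun i => θ i ω) (fun i _ => by positivity) hw (fun i _ => hω i)
    have e : (∑ i ∈ Finset.Icc 1 N, θ i ω) / (N:ℝ)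
        = ∑ i ∈ Finset.Icc 1 N, (N:ℝ)⁻¹ • θ i ω := by
      simp [div_eq_inv_mul, Finset.mul_sum, smul_eq_mul]
    rw [e]; exact hmem
  have int_hat : Integrable
      (fun ω => J ((∑ i ∈ Finset.Icc 1 N, θ i ω) / (N:ℝ)) - J θstar) μ := by
    apply (integrable_const (K₂ * R * R)).mono'
    · have hsm : AEMeasurable (fun ω => (∑ i ∈ Finset.Icc 1 N, θ i ω) / (N:ℝ)) μ :=
        (Finset.aemeasurable_fun_sum _ (fun i _ => hθaem i)).div_const _
      exact ((hJcont.measurable.comp_aemeasurable hsm).sub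
        aemeasurable_const).aestronglyMeasurable
    · filter_upwards [hhatmem] with ω hω
      rw [Real.norm_eq_abs]; exact hJΘ _ hω
  have jensen : ∫ ω, (J ((∑ i ∈ Finset.Icc 1 N, θ i ω) / (N:ℝ)) - J θstar) ∂μ
      ≤ (N:ℝ)⁻¹ * ∑ i ∈ Finset.Icc 1 N, E i := by
    have int_sum : Integrable
        (fun ω => (N:ℝ)⁻¹ * ∑ i ∈ Finset.Icc 1 N, (J (θ i ω) - J θstar)) μ :=
      (integrable_finset_sum _ (fun i _ => int_J i)).const_mul _
    have hae : ∀ᵐ ω ∂μ, J ((∑ i ∈ Finset.Icc 1 N, θ i ω) / (N:ℝ)) - J θstar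
        ≤ (N:ℝ)⁻¹ * ∑ i ∈ Finset.Icc 1 N, (J (θ i ω) - J θstar) := by
      filter_upwards [] with ω
      have hj := hJconv.map_sum_le (t := Finset.Icc 1 N) (w := fun _ => (N:ℝ)⁻¹)
        (p := fun i => θ i ω) (fun i _ => by positivity) hw (fun i _ => Set.mem_univ _)
      have e : (∑ i ∈ Finset.Icc 1 N, θ i ω) / (N:ℝ)
          = ∑ i ∈ Finset.Icc 1 N, (N:ℝ)⁻¹ • θ i ω := by
        simp [div_eq_inv_mul, Finset.mul_sum, smul_eq_mul]
      have e3 : ∑ i ∈ Finset.Icc 1 N, (J (θ i ω) - J θstar)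
          = (∑ i ∈ Finset.Icc 1 N, J (θ i ω)) - (N:ℝ) * J θstar := by
        rw [Finset.sum_sub_distrib, Finset.sum_const, Nat.card_Icc,
          Nat.add_sub_cancel, nsmul_eq_mul]
      have e4 : ∑ i ∈ Finset.Icc 1 N, (N:ℝ)⁻¹ • J (θ i ω)
          = (N:ℝ)⁻¹ * ∑ i ∈ Finset.Icc 1 N, J (θ i ω) := by
        simp [Finset.mul_sum, smul_eq_mul]
      rw [e, e3]
      rw [e4] at hj
      have e5 : (N:ℝ)⁻¹ * ((∑ i ∈ Finset.Icc 1 N, J (θ i ω)) - (N:ℝ) * J θstar)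
          = (N:ℝ)⁻¹ * (∑ i ∈ Finset.Icc 1 N, J (θ i ω)) - J θstar := by
        field_simp
      linarith [hj, e5]
    calc ∫ ω, (J ((∑ i ∈ Finset.Icc 1 N, θ i ω) / (N:ℝ)) - J θstar) ∂μ
        ≤ ∫ ω, ((N:ℝ)⁻¹ * ∑ i ∈ Finset.Icc 1 N, (J (θ i ω) - J θstar)) ∂μ :=
          integral_mono_ae int_hat int_sum hae
      _ = (N:ℝ)⁻¹ * ∑ i ∈ Finset.Icc 1 N, E i := by
          rw [integral_const_mul, integral_finset_sum _ (fun i _ => int_J i)]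
  -- final arithmetic
  set M := max a₀ a₀⁻¹ with hMdef
  have hM1 : a₀ ≤ M := le_max_left _ _
  have hM2 : a₀⁻¹ ≤ M := le_max_right _ _
  have hMpos : 0 < M := lt_of_lt_of_le ha₀ hM1
  have hlog : 0 ≤ Real.log N := Real.log_nonneg (by exact_mod_cast hN)
  have p1 : r ^ 2 / 2 * Real.sqrt N / a₀ ≤ r ^ 2 / 2 * M * Real.sqrt N := by
    rw [div_eq_mul_inv]
    calc r ^ 2 / 2 * Real.sqrt N * a₀⁻¹ ≤ r ^ 2 / 2 * Real.sqrt N * M := by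
          apply mul_le_mul_of_nonneg_left hM2 (by positivity)
      _ = r ^ 2 / 2 * M * Real.sqrt N := by ring
  have hq : C2 / (4 * κ) * 2 ≤ c / κ + K₂ ^ 2 * r ^ 2 / κ ^ 2 := by
    have e : C2 / (4 * κ) * 2 = c / (2 * κ) + K₂ ^ 2 * r ^ 2 / (2 * κ ^ 2) := by
      rw [hC2def]; field_simp; ring
    have h1 : c / (2 * κ) ≤ c / κ := by gcongr; linarith
    have h2 : K₂ ^ 2 * r ^ 2 / (2 * κ ^ 2) ≤ K₂ ^ 2 * r ^ 2 / κ ^ 2 := by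
      gcongr; nlinarith
    linarith [e, h1, h2]
  have p2 : C2 / (4 * κ) * a₀ * (2 * Real.sqrt N)
      ≤ (c / κ + K₂ ^ 2 * r ^ 2 / κ ^ 2) * M * Real.sqrt N := by
    have e : C2 / (4 * κ) * a₀ * (2 * Real.sqrt N)
        = C2 / (4 * κ) * 2 * a₀ * Real.sqrt N := by ring
    rw [e]
    have h1 : C2 / (4 * κ) * 2 * a₀ ≤ (c / κ + K₂ ^ 2 * r ^ 2 / κ ^ 2) * M :=
      mul_le_mul hq hM1 ha₀.le (by positivity)
    exact mul_le_mul_of_nonneg_right h1 hsN0.le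
  have p3 : K3 * 2 ≤ 2.5 * (b ^ 2 / κ) * d₀ ^ 2 * a₀ := by
    have e : K3 * 2 = b ^ 2 / κ * d₀ ^ 2 * a₀ := by rw [hK3def]; field_simp
    have hx : (0:ℝ) ≤ b ^ 2 / κ * d₀ ^ 2 * a₀ := by positivity
    rw [e]; nlinarith [hx]
  have hNT : r ^ 2 / 2 * Real.sqrt N / a₀ + C2 / (4 * κ) * a₀ * (2 * Real.sqrt N)
      + K3 * 2 + b * d₀ * R * (1 + Real.log N)
      ≤ (N:ℝ) * ((r ^ 2 / 2 + 2 * (c / (2 * κ)) + 2 * (K₂ ^ 2 * r ^ 2 / (2 * κ ^ 2)))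
            * M / Real.sqrt N
          + 2.5 * (b ^ 2 / κ) * d₀ ^ 2 * a₀ / (N:ℝ)
          + (b * r / Real.sqrt (2 * κ)) * d₀ * (1 + Real.log N) / (N:ℝ)) := by
    have eNT : (N:ℝ) * ((r ^ 2 / 2 + 2 * (c / (2 * κ)) + 2 * (K₂ ^ 2 * r ^ 2 / (2 * κ ^ 2)))
            * M / Real.sqrt N
          + 2.5 * (b ^ 2 / κ) * d₀ ^ 2 * a₀ / (N:ℝ)
          + (b * r / Real.sqrt (2 * κ)) * d₀ * (1 + Real.log N) / (N:ℝ))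
        = r ^ 2 / 2 * M * Real.sqrt N
          + (c / κ + K₂ ^ 2 * r ^ 2 / κ ^ 2) * M * Real.sqrt N
          + 2.5 * (b ^ 2 / κ) * d₀ ^ 2 * a₀
          + b * d₀ * R * (1 + Real.log N) := by
      have hdiv : (N:ℝ) / Real.sqrt N = Real.sqrt N := by
        rw [div_eq_iff (ne_of_gt hsN0)]
        exact (Real.mul_self_sqrt hNR.le).symm
      have t1 : (N:ℝ) * ((r ^ 2 / 2 + 2 * (c / (2 * κ)) + 2 * (K₂ ^ 2 * r ^ 2 / (2 * κ ^ 2)))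
            * M / Real.sqrt N)
          = r ^ 2 / 2 * M * Real.sqrt N + (c / κ + K₂ ^ 2 * r ^ 2 / κ ^ 2) * M * Real.sqrt N := by
        calc (N:ℝ) * ((r ^ 2 / 2 + 2 * (c / (2 * κ)) + 2 * (K₂ ^ 2 * r ^ 2 / (2 * κ ^ 2)))
              * M / Real.sqrt N)
            = ((r ^ 2 / 2 + 2 * (c / (2 * κ)) + 2 * (K₂ ^ 2 * r ^ 2 / (2 * κ ^ 2))) * M)
              * ((N:ℝ) / Real.sqrt N) := by ring
          _ = ((r ^ 2 / 2 + 2 * (c / (2 * κ)) + 2 * (K₂ ^ 2 * r ^ 2 / (2 * κ ^ 2))) * M)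
              * Real.sqrt N := by rw [hdiv]
          _ = r ^ 2 / 2 * M * Real.sqrt N
              + (c / κ + K₂ ^ 2 * r ^ 2 / κ ^ 2) * M * Real.sqrt N := by
            field_simp
            ring
      have t2 : (N:ℝ) * (2.5 * (b ^ 2 / κ) * d₀ ^ 2 * a₀ / (N:ℝ))
          = 2.5 * (b ^ 2 / κ) * d₀ ^ 2 * a₀ := by
        rw [mul_comm, div_mul_cancel₀ _ (ne_of_gt hNR)]
      have t3 : (N:ℝ) * ((b * r / Real.sqrt (2 * κ)) * d₀ * (1 + Real.log N) / (N:ℝ))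
          = b * d₀ * R * (1 + Real.log N) := by
        rw [mul_comm, div_mul_cancel₀ _ (ne_of_gt hNR), hRdef]
        ring
      rw [mul_add, mul_add, t1, t2, t3]
    rw [eNT]
    linarith [p1, p2, p3]
  calc ∫ ω, (J ((∑ i ∈ Finset.Icc 1 N, θ i ω) / (N:ℝ)) - J θstar) ∂μ
      ≤ (N:ℝ)⁻¹ * ∑ i ∈ Finset.Icc 1 N, E i := jensen
    _ ≤ (N:ℝ)⁻¹ * (r ^ 2 / 2 * Real.sqrt N / a₀ + C2 / (4 * κ) * a₀ * (2 * Real.sqrt N)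
          + K3 * 2 + b * d₀ * R * (1 + Real.log N)) :=
        mul_le_mul_of_nonneg_left sumstep (by positivity)
    _ ≤ (N:ℝ)⁻¹ * ((N:ℝ) * ((r ^ 2 / 2 + 2 * (c / (2 * κ))
            + 2 * (K₂ ^ 2 * r ^ 2 / (2 * κ ^ 2))) * M / Real.sqrt N
          + 2.5 * (b ^ 2 / κ) * d₀ ^ 2 * a₀ / (N:ℝ)
          + (b * r / Real.sqrt (2 * κ)) * d₀ * (1 + Real.log N) / (N:ℝ))) :=
        mul_le_mul_of_nonneg_left hNT (by positivity)
    _ = (r ^ 2 / 2 + 2 * (c / (2 * κ)) + 2 * (K₂ ^ 2 * r ^ 2 / (2 * κ ^ 2)))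
            * M / Real.sqrt N
          + 2.5 * (b ^ 2 / κ) * d₀ ^ 2 * a₀ / (N:ℝ)
          + (b * r / Real.sqrt (2 * κ)) * d₀ * (1 + Real.log N) / (N:ℝ) := by
        rw [← mul_assoc, inv_mul_cancel₀ (ne_of_gt hNR), one_mul]
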